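/- The mixed page number of the complete graph K_n on n vertices is at least ⌈3(n−4)/8⌉. -/

import Mathlib

namespace MixedPaper

variable {V : Type*}

/-- Edges `e₁ = {a,b}` and `e₂ = {c,d}` cross in the pattern `a ≺ c ≺ b ≺ d`,
with respect to the linear vertex order induced by the injection `f`.
(The symmetric pattern `c ≺ a ≺ d ≺ b` is `Cross f e₂ e₁`.) -/
def Cross (f : V → ℕ) (e₁ e₂ : Sym2 V) : Prop :=
  ∃ a b c d : V, e₁ = s(a, b) ∧ e₂ = s(c, d) ∧ f a < f c ∧ f c < f b ∧ f b < f d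

/-- Edge `e₂ = {c,d}` nests inside `e₁ = {a,b}`: `a ≺ c ≺ d ≺ b`.
(The symmetric pattern `c ≺ a ≺ b ≺ d` is `Nest f e₂ e₁`.) -/
def Nest (f : V → ℕ) (e₁ e₂ : Sym2 V) : Prop :=
  ∃ a b c d : V, e₁ = s(a, b) ∧ e₂ = s(c, d) ∧ f a < f c ∧ f c < f d ∧ f d < f b

/-- A set of edges is a stack (w.r.t. the order `f`) if no two of its edges cross. -/
def IsStack (f : V → ℕ) (S : Set (Sym2 V)) : Prop :=
  ∀ e₁ ∈ S, ∀ e₂ ∈ S, ¬ Cross f e₁ e₂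

/-- A set of edges is a queue (w.r.t. the order `f`) if no two of its edges nest. -/
def IsQueue (f : V → ℕ) (S : Set (Sym2 V)) : Prop :=
  ∀ e₁ ∈ S, ∀ e₂ ∈ S, ¬ Nest f e₁ e₂

/-- An `s`-stack `q`-queue layout of `G` with respect to the fixed vertex order `f`:
a partition of the edge set of `G` into `s` stacks and `q` queues (pages `0,…,s-1`
are stacks, pages `s,…,s+q-1` are queues). -/
def MixedLayoutOn (G : SimpleGraph V) (f : V → ℕ) (s q : ℕ) : Prop :=
  ∃ P : Sym2 V → ℕ,
    (∀ e ∈ G.edgeSet, P e < s + q) ∧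
    (∀ i < s, IsStack f {e | e ∈ G.edgeSet ∧ P e = i}) ∧
    (∀ i, s ≤ i → i < s + q → IsQueue f {e | e ∈ G.edgeSet ∧ P e = i})

/-- `G` admits an `s`-stack `q`-queue layout (for some linear vertex order). -/
def HasMixedLayout (G : SimpleGraph V) (s q : ℕ) : Prop :=
  ∃ f : V → ℕ, Function.Injective f ∧ MixedLayoutOn G f s q

/-- The mixed page number of `G`: the minimum `s + q` over all
`s`-stack `q`-queue layouts of `G`. -/
noncomputable def mixedPageNumber (G : SimpleGraph V) : ℕ :=
  sInf {k | ∃ s q, s + q = k ∧ HasMixedLayout G s q}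

def NC (S : Finset (ℕ × ℕ)) : Prop :=
  ∀ p ∈ S, ∀ r ∈ S, ¬ (p.1 < r.1 ∧ r.1 < p.2 ∧ p.2 < r.2)

lemma NC.subset {S T : Finset (ℕ × ℕ)} (h : S ⊆ T) (hT : NC T) : NC S :=
  fun p hp r hr => hT p (h hp) r (h hr)

lemma nc_aux : ∀ m : ℕ, ∀ lo : ℕ, ∀ S : Finset (ℕ × ℕ),
    (∀ p ∈ S, lo ≤ p.1 ∧ p.1 + 2 ≤ p.2 ∧ p.2 < lo + m) → NC S →
    (lo, lo + m - 1) ∉ S → S.card ≤ m - 3 := by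
  intro m
  induction m using Nat.strong_induction_on with
  | _ m IH =>
    have main : ∀ m' < m, ∀ lo (S : Finset (ℕ × ℕ)),
        (∀ p ∈ S, lo ≤ p.1 ∧ p.1 + 2 ≤ p.2 ∧ p.2 < lo + m') → NC S →
        S.card ≤ m' - 2 := by
      intro m' hm' lo S hb hnc
      by_cases hful : (lo, lo + m' - 1) ∈ S
      · have h3 : 3 ≤ m' := by have := hb _ hful; simp at this; omega
        have hb' : ∀ p ∈ S.erase (lo, lo + m' - 1),
            lo ≤ p.1 ∧ p.1 + 2 ≤ p.2 ∧ p.2 < lo + m' :=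
          fun p hp => hb p (Finset.mem_of_mem_erase hp)
        have := IH m' hm' lo (S.erase (lo, lo + m' - 1)) hb'
          (NC.subset (Finset.erase_subset _ _) hnc) (Finset.notMem_erase _ _)
        have hc := Finset.card_erase_of_mem hful
        omega
      · have := IH m' hm' lo S hb hnc hful
        omega
    intro lo S hb hnc hful
    by_cases hm3 : m < 3
    · have : S = ∅ := by
        apply Finset.eq_empty_of_forall_notMem
        intro p hp
        have := hb p hp; omega
      simp [this]
    push_neg at hm3
    by_cases hlo : ∀ p ∈ S, p.1 ≠ lo
    · have hb' : ∀ p ∈ S, lo + 1 ≤ p.1 ∧ p.1 + 2 ≤ p.2 ∧ p.2 < (lo + 1) + (m - 1) := by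
        intro p hp
        have h1 := hb p hp
        have h2 := hlo p hp
        omega
      have := main (m - 1) (by omega) (lo + 1) S hb' hnc
      omega
    · push_neg at hlo
      obtain ⟨p₀, hp₀S, hp₀⟩ := hlo
      have hne : ((S.filter (fun p => p.1 = lo)).image Prod.snd).Nonempty := by
        refine ⟨p₀.2, Finset.mem_image_of_mem _ ?_⟩
        exact Finset.mem_filter.mpr ⟨hp₀S, hp₀⟩
      set J := ((S.filter (fun p => p.1 = lo)).image Prod.snd).max' hne with hJ
      have hJS : (lo, J) ∈ S := by
        have := Finset.max'_mem _ hne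
        rw [← hJ] at this
        obtain ⟨p, hpS, hpJ⟩ := Finset.mem_image.mp this
        have h1 := (Finset.mem_filter.mp hpS).2
        have h2 := (Finset.mem_filter.mp hpS).1
        have : p = (lo, J) := by
          apply Prod.ext <;> simp [h1, hpJ]
        rwa [this] at h2
      have hJmax : ∀ p ∈ S, p.1 = lo → p.2 ≤ J := by
        intro p hpS hplo
        apply Finset.le_max'
        exact Finset.mem_image_of_mem _ (Finset.mem_filter.mpr ⟨hpS, hplo⟩)
      have hJb := hb _ hJS
      simp only at hJb
      have hJne : J ≠ lo + m - 1 := by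
        intro h; exact hful (by rw [← h]; exact hJS)
      have hcov : S ⊆ S.filter (fun p => p.2 ≤ J) ∪ S.filter (fun p => J ≤ p.1) := by
        intro p hp
        rcases le_or_gt p.2 J with h | h
        · exact Finset.mem_union_left _ (Finset.mem_filter.mpr ⟨hp, h⟩)
        · refine Finset.mem_union_right _ (Finset.mem_filter.mpr ⟨hp, ?_⟩)
          have hnc' := hnc (lo, J) hJS p hp
          simp only at hnc'
          have hblo := hb p hp
          rcases eq_or_lt_of_le hblo.1 with heq | hlt
          · exact absurd (hJmax p hp heq.symm) (by omega)
          · by_contra hcon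
            push_neg at hcon
            exact hnc' ⟨hlt, by omega, h⟩
      have h1 := main (J + 1 - lo) (by omega) lo (S.filter (fun p => p.2 ≤ J))
        (by
          intro p hp
          have := hb p (Finset.mem_filter.mp hp).1
          have h2 := (Finset.mem_filter.mp hp).2
          omega)
        (NC.subset (Finset.filter_subset _ _) hnc)
      have h2 := main (lo + m - J) (by omega) J (S.filter (fun p => J ≤ p.1))
        (by
          intro p hp
          have := hb p (Finset.mem_filter.mp hp).1
          have h2 := (Finset.mem_filter.mp hp).2
          omega)
        (NC.subset (Finset.filter_subset _ _) hnc)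
      have hcard := Finset.card_le_card hcov
      have hcard2 := Finset.card_union_le (S.filter (fun p => p.2 ≤ J))
        (S.filter (fun p => J ≤ p.1))
      omega

lemma nc_bound (n : ℕ) (S : Finset (ℕ × ℕ))
    (hb : ∀ p ∈ S, p.1 + 2 ≤ p.2 ∧ p.2 < n) (hnc : NC S) : S.card ≤ n - 2 := by
  have hb' : ∀ p ∈ S, 0 ≤ p.1 ∧ p.1 + 2 ≤ p.2 ∧ p.2 < 0 + n := by
    intro p hp; have := hb p hp; omega
  by_cases hful : (0, 0 + n - 1) ∈ S
  · have h3 : 3 ≤ n := by have := hb' _ hful; simp at this; omega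
    have := nc_aux n 0 (S.erase (0, 0 + n - 1))
      (fun p hp => hb' p (Finset.mem_of_mem_erase hp))
      (NC.subset (Finset.erase_subset _ _) hnc) (Finset.notMem_erase _ _)
    have hc := Finset.card_erase_of_mem hful
    omega
  · have := nc_aux n 0 S hb' hnc hful
    omega

theorem layout_bound {n : ℕ} {f : Fin n → ℕ} (hf : Function.Injective f)
    {s q : ℕ} (h : MixedLayoutOn (SimpleGraph.completeGraph (Fin n)) f s q) :
    3 * (n - 4) ≤ 8 * (s + q) := by
  classical
  obtain ⟨P, hP, hstack, hqueue⟩ := h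
  by_cases hq : n ≤ 2 * q + 2
  · omega
  push_neg at hq
  by_cases hn4 : n ≤ 4
  · omega
  push_neg at hn4
  -- parameters
  set t : ℕ := (n - 2 - 2 * q) / 2 with htdef
  have htD : 2 * t ≤ n - 2 - 2 * q ∧ n - 2 - 2 * q ≤ 2 * t + 1 := by omega
  have h2t : 2 * t + 2 ≤ n := by omega
  -- ordering infrastructure
  have hn0 : 0 < n := by omega
  have himg : (Finset.univ.image f).card = n := by
    rw [Finset.card_image_of_injective _ hf, Finset.card_univ, Fintype.card_fin]
  set oi := (Finset.univ.image f).orderIsoOfFin himg with hoi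
  have hmem : ∀ v : Fin n, f v ∈ Finset.univ.image f :=
    fun v => Finset.mem_image_of_mem f (Finset.mem_univ v)
  set pos : Fin n → Fin n := fun v => oi.symm ⟨f v, hmem v⟩ with hposdef
  have hposlt : ∀ u v : Fin n, pos u < pos v ↔ f u < f v := by
    intro u v
    rw [show pos u = oi.symm ⟨f u, hmem u⟩ from rfl,
        show pos v = oi.symm ⟨f v, hmem v⟩ from rfl,
        OrderIso.lt_iff_lt, Subtype.mk_lt_mk]
  have hposinj : Function.Injective pos := by
    intro u v huv
    apply hf
    have := oi.symm.injective huv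
    exact congrArg Subtype.val this
  have hposbij : Function.Bijective pos := (Finite.injective_iff_bijective).mp hposinj
  set pe := Equiv.ofBijective pos hposbij with hpe
  have hpv : ∀ i, pos (pe.symm i) = i := fun i => pe.apply_symm_apply i
  set vt : ℕ → Fin n := fun i => pe.symm ⟨i % n, Nat.mod_lt _ hn0⟩ with hvtdef
  have hvtlt : ∀ i j : ℕ, i < j → j < n → f (vt i) < f (vt j) := by
    intro i j hij hj
    rw [← hposlt]
    show pos (pe.symm ⟨i % n, _⟩) < pos (pe.symm ⟨j % n, _⟩)
    rw [hpv, hpv, Fin.mk_lt_mk]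
    have h1 : i % n = i := Nat.mod_eq_of_lt (lt_trans hij hj)
    have h2 : j % n = j := Nat.mod_eq_of_lt hj
    omega
  have hvtinj : ∀ i j : ℕ, i < n → j < n → vt i = vt j → i = j := by
    intro i j hi hj hij
    simp only [hvtdef] at hij
    have h0 := pe.symm.injective hij
    have h1 := congrArg Fin.val h0
    simp only at h1
    have h2 : i % n = i := Nat.mod_eq_of_lt hi
    have h3 : j % n = j := Nat.mod_eq_of_lt hj
    omega
  -- edges
  set ed : ℕ × ℕ → Sym2 (Fin n) := fun ij => s(vt ij.1, vt ij.2) with heddef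
  have hedmem : ∀ ij : ℕ × ℕ, ij.1 < ij.2 → ij.2 < n →
      ed ij ∈ (SimpleGraph.completeGraph (Fin n)).edgeSet := by
    intro ij h1 h2
    simp only [heddef, SimpleGraph.completeGraph, SimpleGraph.mem_edgeSet, SimpleGraph.top_adj]
    intro hcontra
    have := hvtinj _ _ (lt_trans h1 h2) h2 hcontra
    omega
  -- page sets
  set Bp : ℕ → Finset (ℕ × ℕ) := fun p =>
    (Finset.range n ×ˢ Finset.range n).filter
      (fun ij => ij.1 + 2 ≤ ij.2 ∧ n - 1 - 2*t ≤ ij.1 + ij.2 ∧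
        ij.1 + ij.2 ≤ n - 1 + 2*t ∧ P (ed ij) = p) with hBpdef
  have hBpmem : ∀ p ij, ij ∈ Bp p ↔ (ij.1 < n ∧ ij.2 < n ∧ ij.1 + 2 ≤ ij.2 ∧
      n - 1 - 2*t ≤ ij.1 + ij.2 ∧ ij.1 + ij.2 ≤ n - 1 + 2*t ∧ P (ed ij) = p) := by
    intro p ij
    simp only [hBpdef, Finset.mem_filter, Finset.mem_product, Finset.mem_range]
    tauto
  -- stack pages are small
  have hstackcard : ∀ p, p < s → (Bp p).card ≤ n - 2 := by
    intro p hp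
    have himgeq : ((Bp p).image (fun ij => (ij.1, ij.2))).card = (Bp p).card := by
      apply Finset.card_image_of_injective
      intro x y hxy
      exact Prod.ext (congrArg Prod.fst hxy) (congrArg Prod.snd hxy)
    rw [← himgeq]
    apply nc_bound n
    · intro ij hij
      obtain ⟨kl, hkl, rfl⟩ := Finset.mem_image.mp hij
      have := (hBpmem p kl).mp hkl
      exact ⟨this.2.2.1, this.2.1⟩
    · intro x hx y hy hcr
      obtain ⟨x', hx', hxe⟩ := Finset.mem_image.mp hx
      obtain ⟨y', hy', hye⟩ := Finset.mem_image.mp hy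
      have hxm := (hBpmem p x').mp hx'
      have hym := (hBpmem p y').mp hy'
      subst hxe hye
      refine hstack p hp (ed x') ⟨hedmem x' (by omega) hxm.2.1, hxm.2.2.2.2.2⟩
        (ed y') ⟨hedmem y' (by omega) hym.2.1, hym.2.2.2.2.2⟩ ?_
      exact ⟨vt x'.1, vt x'.2, vt y'.1, vt y'.2, rfl, rfl,
        hvtlt _ _ hcr.1 hym.1, hvtlt _ _ hcr.2.1 hxm.2.1, hvtlt _ _ hcr.2.2 hym.2.1⟩
  -- queue pages are small
  have hqueuecard : ∀ p, s ≤ p → p < s + q → (Bp p).card ≤ 4*t + 1 := by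
    intro p hp1 hp2
    have hsub : (Bp p).card ≤ (Finset.Icc (n - 1 - 2*t) (n - 1 + 2*t)).card := by
      apply Finset.card_le_card_of_injOn (fun ij => ij.1 + ij.2)
      · intro ij hij
        have := (hBpmem p ij).mp hij
        exact Finset.mem_Icc.mpr ⟨this.2.2.2.1, this.2.2.2.2.1⟩
      · intro x hx y hy hxy
        simp only at hxy
        have hxm := (hBpmem p x).mp (by simpa using hx)
        have hym := (hBpmem p y).mp (by simpa using hy)
        by_contra hne
        have h1 : x.1 ≠ y.1 := by
          intro hh
          apply hne
          have : x.2 = y.2 := by omega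
          exact Prod.ext hh this
        rcases lt_or_gt_of_ne h1 with hlt | hlt
        · exact hqueue p hp1 hp2 (ed x) ⟨hedmem x (by omega) hxm.2.1, hxm.2.2.2.2.2⟩
            (ed y) ⟨hedmem y (by omega) hym.2.1, hym.2.2.2.2.2⟩
            ⟨vt x.1, vt x.2, vt y.1, vt y.2, rfl, rfl,
              hvtlt _ _ hlt hym.1, hvtlt _ _ (by omega) hym.2.1,
              hvtlt _ _ (by omega) hxm.2.1⟩
        · exact hqueue p hp1 hp2 (ed y) ⟨hedmem y (by omega) hym.2.1, hym.2.2.2.2.2⟩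
            (ed x) ⟨hedmem x (by omega) hxm.2.1, hxm.2.2.2.2.2⟩
            ⟨vt y.1, vt y.2, vt x.1, vt x.2, rfl, rfl,
              hvtlt _ _ hlt hxm.1, hvtlt _ _ (by omega) hxm.2.1,
              hvtlt _ _ (by omega) hym.2.1⟩
    have hicc : (Finset.Icc (n - 1 - 2*t) (n - 1 + 2*t)).card = 4*t + 1 := by
      rw [Nat.card_Icc]; omega
    omega
  -- sigma classes
  set cls : ℕ → Finset (ℕ × ℕ) := fun u =>
    (Finset.range n ×ˢ Finset.range n).filter
      (fun ij => ij.1 + 2 ≤ ij.2 ∧ ij.1 + ij.2 = (n - 1 - 2*t) + u) with hclsdef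
  have hclsmem : ∀ u ij, ij ∈ cls u ↔ (ij.1 < n ∧ ij.2 < n ∧ ij.1 + 2 ≤ ij.2 ∧
      ij.1 + ij.2 = (n - 1 - 2*t) + u) := by
    intro u ij
    simp only [hclsdef, Finset.mem_filter, Finset.mem_product, Finset.mem_range]
    tauto
  -- per-class lower bound
  have hclscard : ∀ u, u ≤ 4*t →
      ((n - 1 - 2*t) + u) / 2 - (((n - 1 - 2*t) + u) + 1 - n) ≤ (cls u).card := by
    intro u hu
    set σ := (n - 1 - 2*t) + u with hσdef
    have hσub : σ ≤ 2*n - 3 := by omega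
    have hσlb : 1 ≤ σ := by omega
    have hcim : ((Finset.Ico (σ + 1 - n) (σ / 2)).image (fun a => (a, σ - a))).card
        = σ / 2 - (σ + 1 - n) := by
      rw [Finset.card_image_of_injective, Nat.card_Ico]
      intro a b hab
      exact congrArg Prod.fst hab
    rw [← hcim]
    apply Finset.card_le_card
    intro x hx
    obtain ⟨a, ha, rfl⟩ := Finset.mem_image.mp hx
    have haI := Finset.mem_Ico.mp ha
    rw [hclsmem]
    constructor
    · omega
    constructor
    · omega
    constructor
    · omega
    · omega
  -- classes are pairwise disjoint and included in the pages
  have hcup : (Finset.range (4*t+1)).biUnion cls ⊆ (Finset.range (s+q)).biUnion Bp := by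
    intro ij hij
    obtain ⟨u, hu, hijc⟩ := Finset.mem_biUnion.mp hij
    have hm := (hclsmem u ij).mp hijc
    have hu' : u < 4*t + 1 := Finset.mem_range.mp hu
    have hedge : ed ij ∈ (SimpleGraph.completeGraph (Fin n)).edgeSet :=
      hedmem ij (by omega) hm.2.1
    refine Finset.mem_biUnion.mpr ⟨P (ed ij), Finset.mem_range.mpr (hP _ hedge), ?_⟩
    rw [hBpmem]
    refine ⟨hm.1, hm.2.1, hm.2.2.1, by omega, by omega, rfl⟩
  have hdisj : ∀ u₁ ∈ Finset.range (4*t+1), ∀ u₂ ∈ Finset.range (4*t+1), u₁ ≠ u₂ →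
      Disjoint (cls u₁) (cls u₂) := by
    intro u₁ _ u₂ _ hne
    rw [Finset.disjoint_left]
    intro ij h1 h2
    have := (hclsmem u₁ ij).mp h1
    have := (hclsmem u₂ ij).mp h2
    omega
  have hTsum : ∑ u ∈ Finset.range (4*t+1), (cls u).card
      = ((Finset.range (4*t+1)).biUnion cls).card :=
    (Finset.card_biUnion hdisj).symm
  have hTle : ((Finset.range (4*t+1)).biUnion cls).card
      ≤ ∑ p ∈ Finset.range (s+q), (Bp p).card :=
    le_trans (Finset.card_le_card hcup) Finset.card_biUnion_le
  -- page sums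
  have hpages : ∑ p ∈ Finset.range (s+q), (Bp p).card ≤ s * (n-2) + q * (4*t+1) := by
    rw [Finset.range_eq_Ico, ← Finset.sum_Ico_consecutive _ (Nat.zero_le s) (Nat.le_add_right s q)]
    apply add_le_add
    · calc ∑ p ∈ Finset.Ico 0 s, (Bp p).card
          ≤ (Finset.Ico 0 s).card • (n-2) := by
            apply Finset.sum_le_card_nsmul
            intro p hp
            have := Finset.mem_Ico.mp hp
            exact hstackcard p this.2
        _ = s * (n-2) := by rw [Nat.card_Ico]; simp [smul_eq_mul]
    · calc ∑ p ∈ Finset.Ico s (s+q), (Bp p).card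
          ≤ (Finset.Ico s (s+q)).card • (4*t+1) := by
            apply Finset.sum_le_card_nsmul
            intro p hp
            have := Finset.mem_Ico.mp hp
            exact hqueuecard p this.1 this.2
        _ = q * (4*t+1) := by rw [Nat.card_Ico]; simp [smul_eq_mul]
  -- per-class inequality summed
  have hperclass : ∀ u ∈ Finset.range (4*t+1),
      (n - 1 - 2*t) + u ≤ 2 * (cls u).card + 2 * (u - 2*t) + 1 := by
    intro u hu
    have hu' : u ≤ 4*t := by have := Finset.mem_range.mp hu; omega
    have hc := hclscard u hu'
    have heq : ((n - 1 - 2*t) + u) + 1 - n = u - 2*t := by omega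
    rw [heq] at hc
    omega
  have hsumineq := Finset.sum_le_sum hperclass
  -- compute both sides of the summed inequality
  set M := ∑ u ∈ Finset.range (4*t+1), (cls u).card with hMdef
  have hMle : M ≤ s * (n-2) + q * (4*t+1) :=
    le_trans (le_of_eq hTsum) (le_trans hTle hpages)
  have hlhs : ∑ u ∈ Finset.range (4*t+1), ((n - 1 - 2*t) + u)
      = (4*t+1) * (n - 1 - 2*t) + ∑ u ∈ Finset.range (4*t+1), u := by
    rw [Finset.sum_add_distrib, Finset.sum_const, Finset.card_range, smul_eq_mul]
  have hrhs : ∑ u ∈ Finset.range (4*t+1), (2 * (cls u).card + 2 * (u - 2*t) + 1)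
      = 2 * M + 2 * (∑ u ∈ Finset.range (4*t+1), (u - 2*t)) + (4*t+1) := by
    rw [Finset.sum_add_distrib, Finset.sum_add_distrib, ← Finset.mul_sum, ← Finset.mul_sum,
      Finset.sum_const, Finset.card_range, smul_eq_mul, mul_one, hMdef]
  have hA : ∑ u ∈ Finset.range (4*t+1), (u - 2*t) = ∑ v ∈ Finset.range (2*t+1), v := by
    rw [Finset.range_eq_Ico,
      ← Finset.sum_Ico_consecutive _ (Nat.zero_le (2*t)) (by omega : 2*t ≤ 4*t+1)]
    have h1 : ∑ u ∈ Finset.Ico 0 (2*t), (u - 2*t) = 0 := by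
      apply Finset.sum_eq_zero
      intro x hx
      have := Finset.mem_Ico.mp hx
      omega
    have h2 : ∑ u ∈ Finset.Ico (2*t) (4*t+1), (u - 2*t) = ∑ v ∈ Finset.range (2*t+1), v := by
      rw [Finset.sum_Ico_eq_sum_range]
      have h3 : 4*t+1 - 2*t = 2*t+1 := by omega
      rw [h3]
      apply Finset.sum_congr rfl
      intro v _
      omega
    rw [h1, h2, zero_add, Finset.range_eq_Ico]
  have hG : (∑ u ∈ Finset.range (4*t+1), u) * 2 = (4*t+1) * (4*t) := by
    rw [Finset.sum_range_id_mul_two]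
    congr 1
  have hG2 : (∑ v ∈ Finset.range (2*t+1), v) * 2 = (2*t+1) * (2*t) := by
    rw [Finset.sum_range_id_mul_two]
    congr 1
  -- the master inequality
  rw [hlhs, hrhs, hA] at hsumineq
  -- now finish with integer arithmetic
  set G1 := ∑ u ∈ Finset.range (4*t+1), u with hG1def
  set A1 := ∑ v ∈ Finset.range (2*t+1), v with hA1def
  -- hsumineq : (4t+1)*(n-1-2t) + G1 ≤ 2*M + 2*A1 + (4t+1)
  -- hMle : M ≤ s*(n-2) + q*(4t+1) ; hG : G1*2 = (4t+1)*(4t) ; hG2 : A1*2 = (2t+1)*(2t)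
  have hkey : (4*t+1) * (2*(n - 1 - 2*t)) + (4*t+1)*(4*t)
      ≤ 4 * (s * (n-2) + q * (4*t+1)) + (2*t+1)*(2*t) * 2 + 2*(4*t+1) := by
    calc (4*t+1) * (2*(n - 1 - 2*t)) + (4*t+1)*(4*t)
        = 2 * ((4*t+1) * (n - 1 - 2*t) + G1) := by rw [← hG]; ring
      _ ≤ 2 * (2 * M + 2 * A1 + (4*t+1)) := Nat.mul_le_mul_left 2 hsumineq
      _ ≤ 4 * (s * (n-2) + q * (4*t+1)) + (2*t+1)*(2*t) * 2 + 2*(4*t+1) := by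
          rw [← hG2]; linarith [hMle]
  -- cast to integers and conclude
  clear_value t M G1 A1
  clear hsumineq hMle hG hG2 hlhs hrhs hA hTsum hTle hpages hperclass hdisj hcup hclscard
    hclsmem hclsdef hstackcard hqueuecard hBpmem hBpdef hedmem heddef hvtlt hvtinj hvtdef
    hpv hpe hposlt hMdef hG1def hA1def hP hstack hqueue
  clear cls Bp ed vt M G1 A1 P pe hposbij hposinj hposdef pos hmem oi hoi himg hf f
  have hs1 : 1 ≤ n := by omega
  have hs2 : 2 ≤ n := by omega
  have hs3 : 2*t ≤ n - 1 := by omega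
  have hs4 : 4 ≤ n := by omega
  have hs5 : 2*q ≤ n - 2 := by omega
  have hcase : n - 2 - 2*q = 2*t ∨ n - 2 - 2*q = 2*t + 1 := by omega
  zify [hs1, hs2, hs3, hs4, hs5] at hkey hcase ⊢
  have hn5 : (5:ℤ) ≤ (n:ℤ) := by exact_mod_cast (by omega : 5 ≤ n)
  rcases hcase with hc | hc
  · nlinarith [hkey, sq_nonneg (4*(t:ℤ) - ((n:ℤ) - 2)), hn5]
  · nlinarith [hkey, sq_nonneg (4*(t:ℤ) + 2 - ((n:ℤ) - 2)), hn5]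

lemma not_cross_self {f : V → ℕ} (e : Sym2 V) : ¬ Cross f e e := by
  rintro ⟨a, b, c, d, h1, h2, hac, hcb, hbd⟩
  rw [h1, Sym2.eq_iff] at h2
  rcases h2 with ⟨rfl, rfl⟩ | ⟨rfl, rfl⟩
  · exact lt_irrefl _ hac
  · exact lt_irrefl _ hcb

lemma exists_layout (n : ℕ) :
    HasMixedLayout (SimpleGraph.completeGraph (Fin n)) (Fintype.card (Sym2 (Fin n))) 0 := by
  refine ⟨Fin.val, Fin.val_injective, ?_⟩
  refine ⟨fun e => (Fintype.equivFin (Sym2 (Fin n)) e).val, ?_, ?_, ?_⟩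
  · intro e _
    simp only [add_zero]
    exact (Fintype.equivFin (Sym2 (Fin n)) e).isLt
  · intro i _ e₁ he₁ e₂ he₂ hcr
    have heq : e₁ = e₂ := by
      have h12 := he₁.2.trans he₂.2.symm
      exact (Fintype.equivFin (Sym2 (Fin n))).injective (Fin.val_injective h12)
    subst heq
    exact not_cross_self e₁ hcr
  · intro i h1 h2
    exact absurd h2 (by omega)

/-- The mixed page number of the complete graph `K_n` is at least
`⌈3(n−4)/8⌉` (which, in natural-number arithmetic, is `(3*(n-4) + 7) / 8`). -/
theorem mixedPageNumber_completeGraph_lower (n : ℕ) :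
    (3 * (n - 4) + 7) / 8 ≤ mixedPageNumber (SimpleGraph.completeGraph (Fin n)) := by
  have hne : {k | ∃ s q, s + q = k ∧ HasMixedLayout (SimpleGraph.completeGraph (Fin n)) s q}.Nonempty :=
    ⟨Fintype.card (Sym2 (Fin n)) + 0, ⟨Fintype.card (Sym2 (Fin n)), 0, rfl, exists_layout n⟩⟩
  have hmem := Nat.sInf_mem hne
  obtain ⟨s, q, hsq, f, hf, hlay⟩ := hmem
  have hb := layout_bound hf hlay
  rw [mixedPageNumber]
  omega



end MixedPaper
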